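/- Fix T > 0, M ∈ ℕ₊, and a step function Δ : ℝⁿ → (0, T] satisfying Δ(x) ≥ (a|x|^q + b)^{−1} for constants a, b, q > 0. Suppose a partition 0 = t₀ < t₁ < ⋯ of [0,1] is generated by t_{k+1} = t_k + Δ_k with Δ_k = min{Δ(X_k)/M, 1 − t_k} for some points X_k ∈ ℝⁿ, and let N₁ be the first index with t_{N₁} = 1. Then N₁ ≤ 1 + M·∫₀¹ (a|X̄(t)|^q + b) dt, where X̄(t) = X_k for t ∈ [t_k, t_{k+1}). -/

import Mathlib

open MeasureTheory

/-- Deterministic counting bound for the number of adaptive steps needed to reach `t = 1`: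
`N₁ ≤ 1 + M ∫₀¹ (a|X̄(t)|^q + b) dt`. -/
theorem stmt_12 {n : ℕ} (T : ℝ) (hT : 0 < T) (M : ℕ) (hM : 1 ≤ M)
    (a b q : ℝ) (ha : 0 < a) (hb : 0 < b) (hq : 0 < q)
    (Δ : EuclideanSpace ℝ (Fin n) → ℝ)
    (hΔpos : ∀ x, 0 < Δ x) (hΔT : ∀ x, Δ x ≤ T)
    (hΔlb : ∀ x, (a * ‖x‖ ^ q + b)⁻¹ ≤ Δ x)
    (X : ℕ → EuclideanSpace ℝ (Fin n)) (t : ℕ → ℝ)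
    (ht0 : t 0 = 0)
    (htsucc : ∀ k, t (k + 1) = t k + min (Δ (X k) / M) (1 - t k))
    (N₁ : ℕ) (hN₁ : t N₁ = 1) (hN₁min : ∀ k < N₁, t k < 1)
    (Xbar : ℝ → EuclideanSpace ℝ (Fin n))
    (hXbar : ∀ k, ∀ s ∈ Set.Ico (t k) (t (k + 1)), Xbar s = X k)
    (hInt : IntervalIntegrable (fun s => a * ‖Xbar s‖ ^ q + b) volume 0 1) :
    (N₁ : ℝ) ≤ 1 + M * ∫ s in (0 : ℝ)..1, (a * ‖Xbar s‖ ^ q + b) := by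
  have hM0 : (0:ℝ) < M := by exact_mod_cast hM
  rcases Nat.eq_zero_or_pos N₁ with h0 | hpos
  · subst h0; rw [ht0] at hN₁; norm_num at hN₁
  obtain ⟨K, rfl⟩ : ∃ K, N₁ = K + 1 := ⟨N₁ - 1, (Nat.succ_pred_eq_of_pos hpos).symm⟩
  set f : ℝ → ℝ := fun s => a * ‖Xbar s‖ ^ q + b with hf
  have hfpos : ∀ s, 0 < f s := fun s => by positivity
  -- monotone step
  have hmono : ∀ k ≤ K, t k ≤ t (k+1) := by
    intro k hk
    have h1 : t k < 1 := hN₁min k (by omega)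
    rw [htsucc]
    have : 0 < min (Δ (X k) / M) (1 - t k) :=
      lt_min (div_pos (hΔpos (X k)) hM0) (by linarith)
    linarith
  -- nonneg of t up to K+1
  have hnn : ∀ k ≤ K + 1, 0 ≤ t k := by
    intro k hk
    induction k with
    | zero => simp [ht0]
    | succ m ih =>
      have hm : m ≤ K := by omega
      exact le_trans (ih (by omega)) (hmono m hm)
  -- t k ≤ 1 for k ≤ K+1
  have hle1 : ∀ k ≤ K + 1, t k ≤ 1 := by
    intro k hk
    rcases Nat.lt_or_ge k (K+1) with h | h
    · exact (hN₁min k h).le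
    · have : k = K + 1 := by omega
      rw [this, hN₁]
  -- step size identity for k < K
  have hstep : ∀ k < K, t (k+1) - t k = Δ (X k) / M := by
    intro k hk
    have h1 : t (k+1) < 1 := hN₁min (k+1) (by omega)
    rcases min_cases (Δ (X k) / M) (1 - t k) with ⟨he, _⟩ | ⟨he, _⟩
    · rw [htsucc, he]; ring
    · exfalso
      have := htsucc k
      rw [he] at this
      linarith
  -- integrability on each adjacent interval
  have hIntk : ∀ k < K, IntervalIntegrable f volume (t k) (t (k+1)) := by
    intro k hk
    apply hInt.mono_set
    rw [Set.uIcc_of_le (hmono k (by omega)), Set.uIcc_of_le (by norm_num : (0:ℝ) ≤ 1)]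
    exact Set.Icc_subset_Icc (hnn k (by omega)) (hle1 (k+1) (by omega))
  -- per-interval integral
  have hper : ∀ k < K, ∫ s in (t k)..(t (k+1)), f s
      = (a * ‖X k‖ ^ q + b) * (t (k+1) - t k) := by
    intro k hk
    have hle := hmono k (by omega)
    rw [intervalIntegral.integral_of_le hle]
    have hne : ∀ᵐ x : ℝ, x ≠ t (k+1) := by
      rw [ae_iff]
      simp [measure_singleton]
    have hcongr : ∫ s in Set.Ioc (t k) (t (k+1)), f s
        = ∫ s in Set.Ioc (t k) (t (k+1)), (a * ‖X k‖ ^ q + b) := by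
      apply setIntegral_congr_ae measurableSet_Ioc
      filter_upwards [hne] with x hx hmem
      have : Xbar x = X k := hXbar k x ⟨hmem.1.le, lt_of_le_of_ne hmem.2 hx⟩
      simp [hf, this]
    rw [hcongr, setIntegral_const, Real.volume_real_Ioc_of_le hle,
      smul_eq_mul, mul_comm]
  -- sum of integrals
  have hsum : ∑ k ∈ Finset.range K, ∫ s in (t k)..(t (k+1)), f s
      = ∫ s in (t 0)..(t K), f s :=
    intervalIntegral.sum_integral_adjacent_intervals (fun k hk => hIntk k hk)
  -- count bound
  have hcount : (K : ℝ) ≤ M * ∫ s in (t 0)..(t K), f s := by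
    rw [← hsum, Finset.mul_sum]
    have : (K : ℝ) = ∑ _k ∈ Finset.range K, (1:ℝ) := by simp
    rw [this]
    apply Finset.sum_le_sum
    intro k hk
    have hk' := Finset.mem_range.mp hk
    rw [hper k hk', hstep k hk']
    have hc : 0 < a * ‖X k‖ ^ q + b := by positivity
    have h2 : (a * ‖X k‖ ^ q + b)⁻¹ ≤ Δ (X k) := hΔlb (X k)
    have : (1:ℝ) = (a * ‖X k‖ ^ q + b) * (a * ‖X k‖ ^ q + b)⁻¹ := by
      field_simp
    calc (1:ℝ) = (a * ‖X k‖ ^ q + b) * (a * ‖X k‖ ^ q + b)⁻¹ := this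
      _ ≤ (a * ‖X k‖ ^ q + b) * Δ (X k) := by
          exact mul_le_mul_of_nonneg_left h2 hc.le
      _ = M * ((a * ‖X k‖ ^ q + b) * (Δ (X k) / M)) := by
          field_simp
  -- extend integral to [0,1]
  have hIntL : IntervalIntegrable f volume 0 (t K) := by
    apply hInt.mono_set
    rw [Set.uIcc_of_le (hnn K (by omega)), Set.uIcc_of_le (by norm_num : (0:ℝ) ≤ 1)]
    exact Set.Icc_subset_Icc le_rfl (hle1 K (by omega))
  have hIntR : IntervalIntegrable f volume (t K) 1 := by
    apply hInt.mono_set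
    rw [Set.uIcc_of_le (hle1 K (by omega)), Set.uIcc_of_le (by norm_num : (0:ℝ) ≤ 1)]
    exact Set.Icc_subset_Icc (hnn K (by omega)) le_rfl
  have hsplit : (∫ s in (0:ℝ)..(t K), f s) + ∫ s in (t K)..1, f s
      = ∫ s in (0:ℝ)..1, f s :=
    intervalIntegral.integral_add_adjacent_intervals hIntL hIntR
  have htail : 0 ≤ ∫ s in (t K)..1, f s :=
    intervalIntegral.integral_nonneg (hle1 K (by omega)) (fun s _ => (hfpos s).le)
  have hfinal : (K : ℝ) ≤ M * ∫ s in (0:ℝ)..1, f s := by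
    rw [ht0] at hcount
    nlinarith [hcount, htail]
  push_cast
  linarith
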